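/- If the kernel γ is nonnegative and all quadrature weights are nonnegative, the meshfree stiffness matrix A is weakly diagonally dominant with nonnegative diagonal entries: [A]_{ii} ≥ Σ_{j≠i} |[A]_{ij}| for all i, and hence A is positive semidefinite. -/

import Mathlib

open Matrix

/-- If the kernel `γ` is nonnegative (and symmetric) and the quadrature weights are
nonnegative, the meshfree stiffness matrix `A` is weakly diagonally dominant with
nonnegative diagonal entries, and hence positive semidefinite. -/
theorem meshfree_stiffness_diag_dominant_posSemidef
    {d s b : ℕ}
    (γ : EuclideanSpace ℝ (Fin d) → EuclideanSpace ℝ (Fin d) → ℝ)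
    (hγsymm : ∀ x y, γ x y = γ y x) (hγnonneg : ∀ x y, 0 ≤ γ x y)
    (x : Fin s → EuclideanSpace ℝ (Fin d)) (xΓ : Fin b → EuclideanSpace ℝ (Fin d))
    (ω : Fin s → ℝ) (ωΓ : Fin b → ℝ)
    (hω : ∀ i, 0 ≤ ω i) (hωΓ : ∀ i, 0 ≤ ωΓ i)
    (A : Matrix (Fin s) (Fin s) ℝ)
    (hA : ∀ i j, A i j =
      (if i = j then 2 * ∑ k, γ (x i) (x k) * ω i * ω k else 0)
        - 2 * γ (x i) (x j) * ω i * ω j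
        + (if i = j then 2 * ∑ k, γ (x i) (xΓ k) * ω i * ωΓ k else 0)) :
    (∀ i, 0 ≤ A i i ∧ ∑ j ∈ Finset.univ.erase i, |A i j| ≤ A i i) ∧
      A.PosSemidef := by
  have hcnn : ∀ i j, 0 ≤ 2 * γ (x i) (x j) * ω i * ω j := fun i j =>
    mul_nonneg (mul_nonneg (mul_nonneg (by norm_num) (hγnonneg _ _)) (hω i)) (hω j)
  have hDnn : ∀ i, 0 ≤ 2 * ∑ k, γ (x i) (xΓ k) * ω i * ωΓ k := fun i =>
    mul_nonneg (by norm_num) (Finset.sum_nonneg fun k _ =>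
      mul_nonneg (mul_nonneg (hγnonneg _ _) (hω i)) (hωΓ k))
  have hoff : ∀ i j, i ≠ j → A i j = -(2 * γ (x i) (x j) * ω i * ω j) := by
    intro i j h; rw [hA i j, if_neg h, if_neg h]; ring
  have hmul : ∀ i, 2 * ∑ k, γ (x i) (x k) * ω i * ω k
      = ∑ k, 2 * γ (x i) (x k) * ω i * ω k := by
    intro i; rw [Finset.mul_sum]; exact Finset.sum_congr rfl fun k _ => by ring
  have hdiagsum : ∀ i, A i i =
      (∑ k ∈ Finset.univ.erase i, 2 * γ (x i) (x k) * ω i * ω k)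
        + 2 * ∑ k, γ (x i) (xΓ k) * ω i * ωΓ k := by
    intro i
    rw [hA i i, if_pos rfl, if_pos rfl, hmul i,
      ← Finset.sum_erase_add Finset.univ _ (Finset.mem_univ i)]
    ring
  have hdom : ∀ i, 0 ≤ A i i ∧ ∑ j ∈ Finset.univ.erase i, |A i j| ≤ A i i := by
    intro i
    have h1 : 0 ≤ ∑ k ∈ Finset.univ.erase i, 2 * γ (x i) (x k) * ω i * ω k :=
      Finset.sum_nonneg fun k _ => hcnn i k
    refine ⟨by rw [hdiagsum i]; exact add_nonneg h1 (hDnn i), ?_⟩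
    have habs : ∑ j ∈ Finset.univ.erase i, |A i j|
        = ∑ j ∈ Finset.univ.erase i, 2 * γ (x i) (x j) * ω i * ω j := by
      refine Finset.sum_congr rfl fun j hj => ?_
      have hij : i ≠ j := (Finset.ne_of_mem_erase hj).symm
      rw [hoff i j hij, abs_neg, abs_of_nonneg (hcnn i j)]
    rw [habs, hdiagsum i]
    linarith [hDnn i]
  refine ⟨hdom, ?_⟩
  have herm : A.IsHermitian := by
    ext i j
    simp only [Matrix.conjTranspose_apply, star_trivial]
    rw [hA i j, hA j i]
    by_cases h : i = j
    · subst h; ring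
    · simp only [if_neg h, if_neg (Ne.symm h)]
      rw [hγsymm (x j) (x i)]; ring
  refine Matrix.posSemidef_iff_dotProduct_mulVec.mpr ⟨herm, fun v => ?_⟩
  have hstar : star v = v := funext fun i => rfl
  rw [hstar]
  have inner : ∀ i, (A *ᵥ v) i =
      ((2 * ∑ k, γ (x i) (x k) * ω i * ω k)
        + 2 * ∑ k, γ (x i) (xΓ k) * ω i * ωΓ k) * v i
      - ∑ j, 2 * γ (x i) (x j) * ω i * ω j * v j := by
    intro i
    have hterm : ∀ j, A i j * v j =
        (if i = j then ((2 * ∑ k, γ (x i) (x k) * ω i * ω k)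
          + 2 * ∑ k, γ (x i) (xΓ k) * ω i * ωΓ k) * v j else 0)
        - 2 * γ (x i) (x j) * ω i * ω j * v j := by
      intro j; rw [hA i j]; by_cases h : i = j <;> simp [h] <;> ring
    simp only [Matrix.mulVec, dotProduct, hterm, Finset.sum_sub_distrib,
      Finset.sum_ite_eq, Finset.mem_univ, if_pos]
  have per : ∀ i, v i * (A *ᵥ v) i =
      (∑ j, 2 * γ (x i) (x j) * ω i * ω j * v i ^ 2)
        - (∑ j, 2 * γ (x i) (x j) * ω i * ω j * v i * v j)
        + (2 * ∑ k, γ (x i) (xΓ k) * ω i * ωΓ k) * v i ^ 2 := by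
    intro i
    have a1 : ∑ j, 2 * γ (x i) (x j) * ω i * ω j * v i ^ 2
        = (2 * ∑ j, γ (x i) (x j) * ω i * ω j) * v i ^ 2 := by
      rw [Finset.mul_sum, Finset.sum_mul]
      exact Finset.sum_congr rfl fun j _ => by ring
    have a2 : ∑ j, 2 * γ (x i) (x j) * ω i * ω j * v i * v j
        = v i * ∑ j, 2 * γ (x i) (x j) * ω i * ω j * v j := by
      rw [Finset.mul_sum]
      exact Finset.sum_congr rfl fun j _ => by ring
    rw [inner i, a1, a2]
    ring
  have Qeq : v ⬝ᵥ A *ᵥ v =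
      (∑ i, ∑ j, 2 * γ (x i) (x j) * ω i * ω j * v i ^ 2)
        - (∑ i, ∑ j, 2 * γ (x i) (x j) * ω i * ω j * v i * v j)
        + ∑ i, (2 * ∑ k, γ (x i) (xΓ k) * ω i * ωΓ k) * v i ^ 2 := by
    simp only [dotProduct, per, Finset.sum_add_distrib, Finset.sum_sub_distrib]
  have swap : (∑ i, ∑ j, γ (x i) (x j) * ω i * ω j * v j ^ 2)
      = ∑ i, ∑ j, γ (x i) (x j) * ω i * ω j * v i ^ 2 := by
    rw [Finset.sum_comm]
    exact Finset.sum_congr rfl fun i _ => Finset.sum_congr rfl fun j _ => by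
      rw [hγsymm (x j) (x i)]; ring
  have two : ∑ i, ∑ j, 2 * γ (x i) (x j) * ω i * ω j * v i ^ 2
      = (∑ i, ∑ j, γ (x i) (x j) * ω i * ω j * v i ^ 2)
        + ∑ i, ∑ j, γ (x i) (x j) * ω i * ω j * v i ^ 2 := by
    rw [← Finset.sum_add_distrib]
    refine Finset.sum_congr rfl fun i _ => ?_
    rw [← Finset.sum_add_distrib]
    exact Finset.sum_congr rfl fun j _ => by ring
  have key : (∑ i, ∑ j, γ (x i) (x j) * ω i * ω j * (v i - v j) ^ 2)
      = (∑ i, ∑ j, 2 * γ (x i) (x j) * ω i * ω j * v i ^ 2)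
        - ∑ i, ∑ j, 2 * γ (x i) (x j) * ω i * ω j * v i * v j := by
    have e1 : ∀ i j : Fin s, γ (x i) (x j) * ω i * ω j * (v i - v j) ^ 2
        = (γ (x i) (x j) * ω i * ω j * v i ^ 2 + γ (x i) (x j) * ω i * ω j * v j ^ 2)
          - 2 * γ (x i) (x j) * ω i * ω j * v i * v j := fun i j => by ring
    simp only [e1, Finset.sum_sub_distrib, Finset.sum_add_distrib, swap, two]
  rw [Qeq, ← key]
  have t1 : 0 ≤ ∑ i, ∑ j, γ (x i) (x j) * ω i * ω j * (v i - v j) ^ 2 :=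
    Finset.sum_nonneg fun i _ => Finset.sum_nonneg fun j _ =>
      mul_nonneg (mul_nonneg (mul_nonneg (hγnonneg _ _) (hω i)) (hω j)) (sq_nonneg _)
  have t2 : 0 ≤ ∑ i, (2 * ∑ k, γ (x i) (xΓ k) * ω i * ωΓ k) * v i ^ 2 :=
    Finset.sum_nonneg fun i _ => mul_nonneg (hDnn i) (sq_nonneg _)
  exact add_nonneg t1 t2
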